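/- There is no continuous map f from the space X = { (x₁,x₂,x₃) ∈ (ℝ²)³ : ¬(x₁ = x₂ = x₃) } to the space Y = { (a,b,c) ∈ ℝ³ : ¬(a = b = c) } that is equivariant for the cyclic permutation actions of ℤ/3, i.e., satisfying f(x₂, x₃, x₁) = σ(f(x₁, x₂, x₃)) for all (x₁,x₂,x₃) ∈ X, where σ(a,b,c) = (b,c,a). -/

import Mathlib

open Real Complex Finset Set

noncomputable section NoEquivAux

private abbrev Esp := EuclideanSpace ℝ (Fin 2)
private abbrev Xsp := {v : Esp × Esp × Esp // ¬ (v.1 = v.2.1 ∧ v.2.1 = v.2.2)}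
private abbrev Ysp := {w : ℝ × ℝ × ℝ // ¬ (w.1 = w.2.1 ∧ w.2.1 = w.2.2)}

private def ptE (a b : ℝ) : Esp := (WithLp.equiv 2 (Fin 2 → ℝ)).symm ![a, b]

private lemma ptE_inj {a b c d : ℝ} (h : ptE a b = ptE c d) : a = c ∧ b = d := by
  have h' : (![a, b] : Fin 2 → ℝ) = ![c, d] := (WithLp.equiv 2 (Fin 2 → ℝ)).symm.injective h
  exact ⟨congrFun h' 0, congrFun h' 1⟩

private lemma continuous_ptE {α : Type*} [TopologicalSpace α] {f g : α → ℝ}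
    (hf : Continuous f) (hg : Continuous g) : Continuous fun p => ptE (f p) (g p) := by
  apply (PiLp.continuous_toLp 2 (fun _ : Fin 2 => ℝ)).comp
  refine continuous_pi fun i => ?_
  fin_cases i <;> simpa

private lemma c23 : Real.cos (2*π/3) = -(1/2) := by
  have := Real.cos_pi_sub (π/3)
  rw [show π - π/3 = 2*π/3 by ring] at this
  rw [this, Real.cos_pi_div_three]

private lemma s23 : Real.sin (2*π/3) = Real.sqrt 3/2 := by
  have := Real.sin_pi_sub (π/3)
  rw [show π - π/3 = 2*π/3 by ring] at this
  rw [this, Real.sin_pi_div_three]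

private lemma cadd (t : ℝ) :
    Real.cos (2*π*(t+1/3)) = -(1/2)*Real.cos (2*π*t) - (Real.sqrt 3/2)*Real.sin (2*π*t) := by
  rw [show 2*π*(t+1/3) = 2*π*t + 2*π/3 by ring, Real.cos_add, c23, s23]; ring

private lemma sadd (t : ℝ) :
    Real.sin (2*π*(t+1/3)) = (Real.sqrt 3/2)*Real.cos (2*π*t) - (1/2)*Real.sin (2*π*t) := by
  rw [show 2*π*(t+1/3) = 2*π*t + 2*π/3 by ring, Real.sin_add, c23, s23]; ring

private def h1c (s t : ℝ) : ℝ := Real.cos (π*s/2) * Real.cos (2*π*t) + Real.sin (π*s/2)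
private def h1s (s t : ℝ) : ℝ := Real.cos (π*s/2) * Real.sin (2*π*t)
private def h2c (s t : ℝ) : ℝ := Real.cos (π*s/2) * Real.cos (2*π*(t+1/3)) + Real.sin (π*s/2) * (1/2)
private def h2s (s t : ℝ) : ℝ := Real.cos (π*s/2) * Real.sin (2*π*(t+1/3)) - Real.sin (π*s/2) * (Real.sqrt 3/2)

private lemma hsum (s t : ℝ) : h1c s t^2 + h1s s t^2 + h2c s t^2 + h2s s t^2 = 2 := by
  unfold h1c h1s h2c h2s
  rw [cadd, sadd]
  have hc2 := Real.sin_sq_add_cos_sq (π*s/2)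
  have ht2 := Real.sin_sq_add_cos_sq (2*π*t)
  have h3 : Real.sqrt 3^2 = 3 := Real.sq_sqrt (by norm_num)
  set A := Real.cos (π*s/2); set B := Real.sin (π*s/2)
  set c := Real.cos (2*π*t); set d := Real.sin (2*π*t); set r := Real.sqrt 3
  linear_combination (A^2*(2 + (r^2-3)/4)) * ht2 + (2 + (r^2-3)/4) * hc2 + (1/4 - A*B*c/2) * h3

private def xpt (s t : ℝ) : Esp × Esp × Esp :=
  (ptE (h1c s t) (h1s s t), ptE (h2c s t) (h2s s t),
    ptE (-h1c s t - h2c s t) (-h1s s t - h2s s t))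

private lemma xpt_mem (s t : ℝ) :
    ¬ ((xpt s t).1 = (xpt s t).2.1 ∧ (xpt s t).2.1 = (xpt s t).2.2) := by
  rintro ⟨h12, h23⟩
  obtain ⟨e1, e2⟩ := ptE_inj h12
  obtain ⟨e3, e4⟩ := ptE_inj h23
  have hs := hsum s t
  have c1 : h1c s t = 0 := by linarith
  have c2 : h1s s t = 0 := by linarith
  have c3 : h2c s t = 0 := by linarith
  have c4 : h2s s t = 0 := by linarith
  rw [c1, c2, c3, c4] at hs; norm_num at hs

private lemma xpt_mem' (s t : ℝ) :
    ¬ ((xpt s t).2.1 = (xpt s t).2.2 ∧ (xpt s t).2.2 = (xpt s t).1) := by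
  rintro ⟨ha, hb⟩
  exact xpt_mem s t ⟨hb.symm.trans ha.symm, ha⟩
private lemma cper (t : ℝ) : Real.cos (2*π*(t+1)) = Real.cos (2*π*t) := by
  rw [show 2*π*(t+1) = 2*π*t + 2*π by ring, Real.cos_add_two_pi]

private lemma sper (t : ℝ) : Real.sin (2*π*(t+1)) = Real.sin (2*π*t) := by
  rw [show 2*π*(t+1) = 2*π*t + 2*π by ring, Real.sin_add_two_pi]

private lemma xpt_per (s t : ℝ) : xpt s (t+1) = xpt s t := by
  unfold xpt h1c h1s h2c h2s
  rw [show t+1+1/3 = (t+1/3)+1 by ring, cper, sper, cper, sper]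

private lemma l1 (t : ℝ) :
    Real.cos (2*π*(t+1/3+1/3)) = -Real.cos (2*π*t) - Real.cos (2*π*(t+1/3)) := by
  have h3 : Real.sqrt 3^2 = 3 := Real.sq_sqrt (by norm_num)
  rw [cadd (t+1/3), cadd t, sadd t]
  linear_combination (-Real.cos (2*π*t)/4) * h3

private lemma l2 (t : ℝ) :
    Real.sin (2*π*(t+1/3+1/3)) = -Real.sin (2*π*t) - Real.sin (2*π*(t+1/3)) := by
  have h3 : Real.sqrt 3^2 = 3 := Real.sq_sqrt (by norm_num)
  rw [sadd (t+1/3), cadd t, sadd t]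
  linear_combination (-Real.sin (2*π*t)/4) * h3

private lemma ptE_congr {a b c d : ℝ} (h1 : a = c) (h2 : b = d) : ptE a b = ptE c d := by
  rw [h1, h2]

private lemma xpt_zero (t : ℝ) :
    xpt 0 (t+1/3) = ((xpt 0 t).2.1, (xpt 0 t).2.2, (xpt 0 t).1) := by
  have hA : Real.cos (π*0/2) = 1 := by norm_num
  have hB : Real.sin (π*0/2) = 0 := by norm_num
  have e1 := l1 t; have e2 := l2 t
  unfold xpt h1c h1s h2c h2s
  rw [hA, hB]
  refine Prod.ext ?_ (Prod.ext ?_ ?_)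
  · exact ptE_congr (by ring) (by ring)
  · exact ptE_congr (by linarith) (by linarith)
  · exact ptE_congr (by linarith) (by linarith)

private lemma xpt_one (t : ℝ) : xpt 1 t = xpt 1 0 := by
  have hA : Real.cos (π*1/2) = 0 := by rw [show π*1/2 = π/2 by ring, Real.cos_pi_div_two]
  unfold xpt h1c h1s h2c h2s
  rw [hA]; ring_nf

private def zeta (w : ℝ × ℝ × ℝ) : ℂ :=
  ((w.1 - w.2.1/2 - w.2.2/2 : ℝ) : ℂ) + ((Real.sqrt 3/2 * (w.2.1 - w.2.2) : ℝ) : ℂ) * Complex.I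

private lemma zeta_ne (w : ℝ × ℝ × ℝ) (hw : ¬ (w.1 = w.2.1 ∧ w.2.1 = w.2.2)) : zeta w ≠ 0 := by
  intro h0
  apply hw
  have him : Real.sqrt 3/2 * (w.2.1 - w.2.2) = 0 := by
    have := congrArg Complex.im h0
    simpa [zeta] using this
  have hre : w.1 - w.2.1/2 - w.2.2/2 = 0 := by
    have := congrArg Complex.re h0
    simpa [zeta] using this
  have h3 : (0:ℝ) < Real.sqrt 3 := Real.sqrt_pos.mpr (by norm_num)
  have hbc : w.2.1 = w.2.2 := by
    rcases mul_eq_zero.mp him with h | h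
    · linarith
    · linarith
  exact ⟨by linarith, hbc⟩

private def mu : ℂ := ((-(1:ℝ)/2 : ℝ) : ℂ) + ((-(Real.sqrt 3)/2 : ℝ) : ℂ) * Complex.I

private lemma mu_abs : ‖mu‖ = 1 := by
  unfold mu
  rw [Complex.norm_add_mul_I]
  have h3 : Real.sqrt 3^2 = 3 := Real.sq_sqrt (by norm_num)
  rw [show (-(1:ℝ)/2)^2 + (-(Real.sqrt 3)/2)^2 = 1 by nlinarith]
  exact Real.sqrt_one

private lemma mu_ne_zero : mu ≠ 0 := by
  intro h
  have := mu_abs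
  rw [h] at this
  simp at this

private lemma mu_ne_one : mu ≠ 1 := by
  intro h
  have := congrArg Complex.re h
  simp [mu] at this
  linarith

private lemma zeta_sigma (w : ℝ × ℝ × ℝ) : zeta (w.2.1, w.2.2, w.1) = mu * zeta w := by
  have h3 : Real.sqrt 3^2 = 3 := Real.sq_sqrt (by norm_num)
  obtain ⟨a, b, c⟩ := w
  simp only [zeta, mu, Complex.ext_iff, Complex.add_re, Complex.add_im, Complex.mul_re,
    Complex.mul_im, Complex.ofReal_re, Complex.ofReal_im, Complex.I_re, Complex.I_im]
  refine ⟨?_, ?_⟩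
  · linear_combination (-(b - c)/4) * h3
  · linear_combination 0 * h3
private def Kmap (f : Xsp → Ysp) (s t : ℝ) : ℂ := zeta (f ⟨xpt s t, xpt_mem s t⟩).val

private lemma Kmap_ne (f : Xsp → Ysp) (s t : ℝ) : Kmap f s t ≠ 0 :=
  zeta_ne _ (f ⟨xpt s t, xpt_mem s t⟩).property

private lemma Kmap_per (f : Xsp → Ysp) (s t : ℝ) : Kmap f s (t+1) = Kmap f s t := by
  unfold Kmap
  congr 1
  exact congrArg (fun z => (f z).val) (Subtype.ext (xpt_per s t))

private lemma Kmap_one (f : Xsp → Ysp) (t : ℝ) : Kmap f 1 t = Kmap f 1 0 := by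
  unfold Kmap
  congr 1
  exact congrArg (fun z => (f z).val) (Subtype.ext (xpt_one t))

private lemma Kmap_cont (f : Xsp → Ysp) (hf : Continuous f) :
    Continuous fun p : ℝ × ℝ => Kmap f p.1 p.2 := by
  have hA : Continuous fun p : ℝ × ℝ => Real.cos (π*p.1/2) :=
    Real.continuous_cos.comp (by fun_prop)
  have hB : Continuous fun p : ℝ × ℝ => Real.sin (π*p.1/2) :=
    Real.continuous_sin.comp (by fun_prop)
  have hc : Continuous fun p : ℝ × ℝ => Real.cos (2*π*p.2) :=
    Real.continuous_cos.comp (by fun_prop)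
  have hd : Continuous fun p : ℝ × ℝ => Real.sin (2*π*p.2) :=
    Real.continuous_sin.comp (by fun_prop)
  have hc' : Continuous fun p : ℝ × ℝ => Real.cos (2*π*(p.2+1/3)) :=
    Real.continuous_cos.comp (by fun_prop)
  have hd' : Continuous fun p : ℝ × ℝ => Real.sin (2*π*(p.2+1/3)) :=
    Real.continuous_sin.comp (by fun_prop)
  have h1 : Continuous fun p : ℝ × ℝ => h1c p.1 p.2 := by
    unfold h1c; exact (hA.mul hc).add hB
  have h2 : Continuous fun p : ℝ × ℝ => h1s p.1 p.2 := by
    unfold h1s; exact hA.mul hd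
  have h3 : Continuous fun p : ℝ × ℝ => h2c p.1 p.2 := by
    unfold h2c; exact (hA.mul hc').add (hB.mul continuous_const)
  have h4 : Continuous fun p : ℝ × ℝ => h2s p.1 p.2 := by
    unfold h2s; exact (hA.mul hd').sub (hB.mul continuous_const)
  have hx : Continuous fun p : ℝ × ℝ => xpt p.1 p.2 := by
    unfold xpt
    exact (continuous_ptE h1 h2).prodMk ((continuous_ptE h3 h4).prodMk
      (continuous_ptE ((h1.neg).sub h3) ((h2.neg).sub h4)))
  have hzeta : Continuous zeta := by
    unfold zeta
    fun_prop
  unfold Kmap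
  exact hzeta.comp (continuous_subtype_val.comp (hf.comp (hx.subtype_mk _)))

private lemma Kmap_phi (f : Xsp → Ysp)
    (hfe : ∀ (v : Esp × Esp × Esp)
        (hv : ¬ (v.1 = v.2.1 ∧ v.2.1 = v.2.2))
        (hv' : ¬ (v.2.1 = v.2.2 ∧ v.2.2 = v.1)),
        ((f ⟨(v.2.1, v.2.2, v.1), hv'⟩ : ℝ × ℝ × ℝ)) =
          (((f ⟨v, hv⟩ : ℝ × ℝ × ℝ)).2.1, ((f ⟨v, hv⟩ : ℝ × ℝ × ℝ)).2.2,
            ((f ⟨v, hv⟩ : ℝ × ℝ × ℝ)).1))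
    (t : ℝ) : Kmap f 0 (t + 1/3) = mu * Kmap f 0 t := by
  have hv := xpt_mem 0 t
  have hv' := xpt_mem' 0 t
  have hpt : (⟨xpt 0 (t+1/3), xpt_mem 0 (t+1/3)⟩ : Xsp)
      = ⟨((xpt 0 t).2.1, (xpt 0 t).2.2, (xpt 0 t).1), hv'⟩ := Subtype.ext (xpt_zero t)
  calc Kmap f 0 (t + 1/3) = zeta (f ⟨((xpt 0 t).2.1, (xpt 0 t).2.2, (xpt 0 t).1), hv'⟩).val := by
        unfold Kmap; rw [hpt]
    _ = zeta ((f ⟨xpt 0 t, hv⟩).val.2.1, (f ⟨xpt 0 t, hv⟩).val.2.2, (f ⟨xpt 0 t, hv⟩).val.1) := by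
        rw [hfe (xpt 0 t) hv hv']
    _ = mu * Kmap f 0 t := by
        rw [zeta_sigma]; rfl

private lemma prod_eq_abs_exp (F : ℕ → ℂ) (l : ℕ) :
    ∏ k ∈ Finset.range l, F k =
      ((∏ k ∈ Finset.range l, ‖F k‖ : ℝ) : ℂ) *
        Complex.exp ((∑ k ∈ Finset.range l, Complex.arg (F k) : ℝ) * Complex.I) := by
  induction l with
  | zero => simp
  | succ l ih =>
      rw [Finset.prod_range_succ, ih, Finset.prod_range_succ, Finset.sum_range_succ]
      conv_lhs => rw [← Complex.norm_mul_exp_arg_mul_I (F l)]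
      push_cast
      rw [add_mul, Complex.exp_add]
      ring

private lemma telescope (g : ℕ → ℂ) (hg : ∀ k, g k ≠ 0) (l : ℕ) :
    ∏ k ∈ Finset.range l, (g (k+1) / g k) = g l / g 0 := by
  induction l with
  | zero => simp [div_self (hg 0)]
  | succ l ih =>
      rw [Finset.prod_range_succ, ih, div_mul_div_comm, mul_comm (g 0) (g l),
        mul_div_mul_left _ _ (hg l)]

private lemma ratio_slit {z1 z2 : ℂ} (h1 : z1 ≠ 0) (h : ‖z2 - z1‖ < ‖z1‖) :
    z2 / z1 ∈ Complex.slitPlane := by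
  have hpos : 0 < ‖z1‖ := by
    simpa [norm_pos_iff] using h1
  have h2 : ‖z2/z1 - 1‖ < 1 := by
    rw [show z2/z1 - 1 = (z2 - z1)/z1 by field_simp]
    rw [norm_div]
    exact (div_lt_one hpos).mpr h
  rw [Complex.mem_slitPlane_iff]
  left
  have hre := Complex.abs_re_le_norm (z2/z1 - 1)
  rw [Complex.sub_re, Complex.one_re] at hre
  have := abs_le.mp hre
  linarith [this.1, h2]

private lemma Kmap_cont1 (f : Xsp → Ysp) (hf : Continuous f) (c : ℝ) :
    Continuous fun s : ℝ => Kmap f s c := by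
  have h1 : Continuous fun s : ℝ => ((s, c) : ℝ × ℝ) := continuous_id.prodMk continuous_const
  have h2 := (Kmap_cont f hf).comp h1
  exact h2
private lemma exp_sum_arg (G : ℕ → ℂ) (hG : ∀ k, G k ≠ 0) (n : ℕ) (z : ℂ)
    (hz : G n = z * G 0) (hza : ‖z‖ = 1) :
    Complex.exp ((∑ k ∈ Finset.range n, Complex.arg (G (k+1) / G k) : ℝ) * Complex.I) = z := by
  have htel : ∏ k ∈ Finset.range n, (G (k+1)/G k) = z := by
    rw [telescope G hG n, hz, mul_div_assoc, div_self (hG 0), mul_one]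
  have hkey : (∏ k ∈ Finset.range n, (G (k+1)/G k)) =
      ((∏ k ∈ Finset.range n, ‖G (k+1)/G k‖ : ℝ) : ℂ) *
        Complex.exp ((∑ k ∈ Finset.range n, Complex.arg (G (k+1)/G k) : ℝ) * Complex.I) :=
    prod_eq_abs_exp _ n
  have habs1 : (∏ k ∈ Finset.range n, ‖G (k+1)/G k‖) = 1 := by
    rw [← norm_prod, htel, hza]
  rw [htel, habs1] at hkey
  simpa using hkey.symm

private lemma sum_arg_loop (G : ℕ → ℂ) (hG : ∀ k, G k ≠ 0) (n : ℕ) (hper : G n = G 0) :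
    ∃ j : ℤ, (∑ k ∈ Finset.range n, Complex.arg (G (k+1) / G k)) = 2*π*j := by
  have h1 := exp_sum_arg G hG n 1 (by rw [one_mul, hper]) (by simp)
  rw [Complex.exp_eq_one_iff] at h1
  obtain ⟨j, hj⟩ := h1
  refine ⟨j, ?_⟩
  have h2 : ((∑ k ∈ Finset.range n, Complex.arg (G (k+1) / G k) : ℝ) : ℂ)
      = (j : ℂ) * (2*(π:ℂ)) := by
    apply mul_right_cancel₀ Complex.I_ne_zero
    rw [hj]; ring
  have h3 : (∑ k ∈ Finset.range n, Complex.arg (G (k+1) / G k)) = (j:ℝ) * (2*π) := by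
    exact_mod_cast h2
  linarith

end NoEquivAux

set_option maxHeartbeats 1000000 in
/-- There is no continuous map from the complement of the diagonal in `(ℝ²)³` to the
complement of the diagonal line in `ℝ³` that is equivariant for the cyclic `ℤ/3`-actions
permuting the coordinates. -/
theorem no_equivariant_map_diagonal_complements :
    ¬ ∃ f : {v : EuclideanSpace ℝ (Fin 2) × EuclideanSpace ℝ (Fin 2) × EuclideanSpace ℝ (Fin 2) //
              ¬ (v.1 = v.2.1 ∧ v.2.1 = v.2.2)} →
            {w : ℝ × ℝ × ℝ // ¬ (w.1 = w.2.1 ∧ w.2.1 = w.2.2)},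
      Continuous f ∧
      ∀ (v : EuclideanSpace ℝ (Fin 2) × EuclideanSpace ℝ (Fin 2) × EuclideanSpace ℝ (Fin 2))
        (hv : ¬ (v.1 = v.2.1 ∧ v.2.1 = v.2.2))
        (hv' : ¬ (v.2.1 = v.2.2 ∧ v.2.2 = v.1)),
        ((f ⟨(v.2.1, v.2.2, v.1), hv'⟩ : ℝ × ℝ × ℝ)) =
          (((f ⟨v, hv⟩ : ℝ × ℝ × ℝ)).2.1, ((f ⟨v, hv⟩ : ℝ × ℝ × ℝ)).2.2,
            ((f ⟨v, hv⟩ : ℝ × ℝ × ℝ)).1) := by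
  rintro ⟨f, hfc, hfe⟩
  -- the compact square
  set D : Set (ℝ × ℝ) := Set.Icc 0 1 ×ˢ Set.Icc 0 1 with hD
  have hDc : IsCompact D := isCompact_Icc.prod isCompact_Icc
  have hDne : D.Nonempty := ⟨(0, 0), by simp [hD]⟩
  have hKc : Continuous (fun p : ℝ × ℝ => Kmap f p.1 p.2) := Kmap_cont f hfc
  -- minimum modulus
  obtain ⟨p₀, hp₀D, hp₀⟩ := hDc.exists_isMinOn hDne
    ((continuous_norm.comp hKc).continuousOn)
  set m0 : ℝ := ‖Kmap f p₀.1 p₀.2‖ with hm0def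
  have hm0 : 0 < m0 := by
    rw [hm0def]
    exact norm_pos_iff.mpr (Kmap_ne f p₀.1 p₀.2)
  have hmin : ∀ p ∈ D, m0 ≤ ‖Kmap f p.1 p.2‖ := fun p hp => hp₀ hp
  -- uniform continuity
  have hu := hDc.uniformContinuousOn_of_continuous hKc.continuousOn
  rw [Metric.uniformContinuousOn_iff] at hu
  obtain ⟨δ, hδ, hu⟩ := hu m0 hm0
  obtain ⟨M, hM⟩ := exists_nat_gt (1/δ)
  set m : ℕ := M + 1 with hmdef
  set n : ℕ := 3 * m with hndef
  have hm1 : 1 ≤ m := by omega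
  have hn0 : 0 < n := by omega
  have hnR : (0:ℝ) < n := by exact_mod_cast hn0
  have hmR : (0:ℝ) < m := by exact_mod_cast hm1
  have hnδ : 1/(n:ℝ) < δ := by
    have h1 : (1:ℝ)/δ < n := by
      have : (M:ℝ) ≤ n := by exact_mod_cast Nat.le_of_lt (by omega)
      linarith
    rw [div_lt_iff₀ hnR]
    rw [div_lt_iff₀ hδ] at h1
    linarith [mul_comm δ (n:ℝ)]
  -- grid bound
  have hgrid : ∀ s ∈ Set.Icc (0:ℝ) 1, ∀ k : ℕ, k < n →
      ‖Kmap f s (((k+1 : ℕ) : ℝ)/n) - Kmap f s ((k : ℝ)/n)‖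
        < ‖Kmap f s ((k : ℝ)/n)‖ := by
    intro s hs k hk
    have hk1 : ((k:ℝ)+1) ≤ n := by exact_mod_cast hk
    have ht1 : (((k+1:ℕ)):ℝ)/n ∈ Set.Icc (0:ℝ) 1 := by
      constructor
      · positivity
      · rw [div_le_one hnR]; push_cast; linarith
    have ht2 : ((k:ℝ))/n ∈ Set.Icc (0:ℝ) 1 := by
      constructor
      · positivity
      · rw [div_le_one hnR]; linarith
    have hdist : dist ((s, (((k+1:ℕ)):ℝ)/n) : ℝ × ℝ) ((s, ((k:ℝ))/n) : ℝ × ℝ) < δ := by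
      rw [Prod.dist_eq]
      apply max_lt (by simpa using hδ)
      rw [Real.dist_eq]
      have : (((k+1:ℕ)):ℝ)/n - ((k:ℝ))/n = 1/n := by push_cast; field_simp; ring
      rw [this, abs_of_pos (by positivity)]
      exact hnδ
    have := hu (s, (((k+1:ℕ)):ℝ)/n) (by exact ⟨hs, ht1⟩) (s, ((k:ℝ))/n) (by exact ⟨hs, ht2⟩) hdist
    rw [Complex.dist_eq] at this
    exact lt_of_lt_of_le this (hmin ((s, ((k:ℝ))/n)) (by exact ⟨hs, ht2⟩))
  -- the discretized winding number
  set S : ℝ → ℝ := fun s => ∑ k ∈ Finset.range n,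
    Complex.arg (Kmap f s (((k+1 : ℕ) : ℝ)/n) / Kmap f s ((k : ℝ)/n)) with hSdef
  -- S takes values in 2πℤ
  have hSint : ∀ s : ℝ, ∃ j : ℤ, S s = 2*π*j := by
    intro s
    have hper : Kmap f s (((n:ℕ) : ℝ)/n) = Kmap f s (((0:ℕ) : ℝ)/n) := by
      rw [div_self (ne_of_gt hnR)]
      rw [show (((0:ℕ):ℝ))/n = 0 by simp]
      have := Kmap_per f s 0
      rw [zero_add] at this
      exact this
    exact sum_arg_loop (fun k => Kmap f s ((k : ℝ)/n)) (fun k => Kmap_ne f s _) n hper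
  -- continuity of S on [0,1]
  have hScont : ContinuousOn S (Set.Icc 0 1) := by
    rw [hSdef]
    apply continuousOn_finset_sum
    intro k hk
    rw [Finset.mem_range] at hk
    intro s hs
    apply ContinuousAt.continuousWithinAt
    have hK1 : Continuous fun s : ℝ => Kmap f s (((k+1 : ℕ) : ℝ)/n) := Kmap_cont1 f hfc _
    have hK2 : Continuous fun s : ℝ => Kmap f s ((k : ℝ)/n) := Kmap_cont1 f hfc _
    have hratio : ContinuousAt (fun s : ℝ =>
        Kmap f s (((k+1 : ℕ) : ℝ)/n) / Kmap f s ((k : ℝ)/n)) s :=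
      (hK1.div hK2 (fun s => Kmap_ne f s _)).continuousAt
    exact ContinuousAt.comp (x := s)
      (g := Complex.arg)
      (Complex.continuousAt_arg (ratio_slit (Kmap_ne f s _) (hgrid s hs k hk))) hratio
  -- S 1 = 0
  have hS1 : S 1 = 0 := by
    rw [hSdef]
    apply Finset.sum_eq_zero
    intro k hk
    rw [Kmap_one f (((k+1 : ℕ) : ℝ)/n), Kmap_one f ((k : ℝ)/n),
      div_self (Kmap_ne f 1 0), Complex.arg_one]
  -- S 0 = 0 by the intermediate value theorem
  have hS0 : S 0 = 0 := by
    by_contra hne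
    rcases lt_or_gt_of_ne hne with hneg | hpos
    · obtain ⟨j0, hj0⟩ := hSint 0
      have hj0neg : (j0:ℝ) ≤ -1 := by
        have h0 : (j0:ℝ) < 0 := by nlinarith [Real.pi_pos]
        have hi : j0 < 0 := by exact_mod_cast h0
        have hi2 : j0 ≤ -1 := by omega
        exact_mod_cast hi2
      have hmem : -π ∈ Set.Icc (S 0) (S 1) := by
        rw [hS1]
        constructor
        · rw [hj0]; nlinarith [Real.pi_pos]
        · linarith [Real.pi_pos]
      obtain ⟨s, _, hs⟩ := intermediate_value_Icc (by norm_num : (0:ℝ) ≤ 1) hScont hmem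
      obtain ⟨j, hj⟩ := hSint s
      rw [hj] at hs
      have h2 : (2*(j:ℝ) + 1) * π = 0 := by linarith
      have h3 : 2*(j:ℝ) + 1 = 0 := by
        rcases mul_eq_zero.mp h2 with h | h
        · exact h
        · exact absurd h Real.pi_ne_zero
      have : (2*j + 1 : ℤ) = 0 := by exact_mod_cast h3
      omega
    · obtain ⟨j0, hj0⟩ := hSint 0
      have hj0pos : (1:ℝ) ≤ (j0:ℝ) := by
        have h0 : (0:ℝ) < (j0:ℝ) := by nlinarith [Real.pi_pos]
        have hi : 0 < j0 := by exact_mod_cast h0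
        have hi2 : 1 ≤ j0 := by omega
        exact_mod_cast hi2
      have hmem : π ∈ Set.Icc (S 1) (S 0) := by
        rw [hS1]
        constructor
        · linarith [Real.pi_pos]
        · rw [hj0]; nlinarith [Real.pi_pos]
      obtain ⟨s, _, hs⟩ := intermediate_value_Icc' (by norm_num : (0:ℝ) ≤ 1) hScont hmem
      obtain ⟨j, hj⟩ := hSint s
      rw [hj] at hs
      have h2 : (2*(j:ℝ) - 1) * π = 0 := by linarith
      have h3 : 2*(j:ℝ) - 1 = 0 := by
        rcases mul_eq_zero.mp h2 with h | h
        · exact h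
        · exact absurd h Real.pi_ne_zero
      have : (2*j - 1 : ℤ) = 0 := by exact_mod_cast h3
      omega
  -- the splitting S 0 = 3 * S₁
  set a : ℕ → ℝ := fun k =>
    Complex.arg (Kmap f 0 (((k+1 : ℕ) : ℝ)/n) / Kmap f 0 ((k : ℝ)/n)) with hadef
  have hshift : ∀ k : ℕ, Kmap f 0 (((m + k : ℕ) : ℝ)/n) = mu * Kmap f 0 ((k : ℝ)/n) := by
    intro k
    have hx : (((m + k : ℕ)) : ℝ)/n = (k : ℝ)/n + 1/3 := by
      rw [hndef]
      push_cast
      field_simp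
      ring
    rw [hx]
    exact Kmap_phi f hfe ((k : ℝ)/n)
  have haper : ∀ k : ℕ, a (m + k) = a k := by
    intro k
    rw [hadef]
    simp only []
    rw [show m + k + 1 = m + (k + 1) by omega]
    rw [hshift (k+1), hshift k, mul_div_mul_left _ _ mu_ne_zero]
  have hsplit : S 0 = 3 * ∑ k ∈ Finset.range m, a k := by
    have hSa : S 0 = ∑ k ∈ Finset.range n, a k := rfl
    rw [hSa, show n = m + (m + m) by omega, Finset.sum_range_add a m (m + m),
      Finset.sum_range_add (fun x => a (m + x)) m m]
    have e1 : ∑ k ∈ Finset.range m, a (m + k) = ∑ k ∈ Finset.range m, a k :=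
      Finset.sum_congr rfl fun k _ => haper k
    have e2 : ∑ k ∈ Finset.range m, a (m + (m + k)) = ∑ k ∈ Finset.range m, a k :=
      Finset.sum_congr rfl fun k _ => (haper (m + k)).trans (haper k)
    rw [e1, e2]
    ring
  -- exp(i S₁) = μ
  have hzm : Kmap f 0 (((m:ℕ) : ℝ)/n) = mu * Kmap f 0 (((0:ℕ) : ℝ)/n) := by
    have := hshift 0
    rw [show m + 0 = m by omega] at this
    exact this
  have hexp : Complex.exp ((∑ k ∈ Finset.range m, a k : ℝ) * Complex.I) = mu :=
    exp_sum_arg (fun k => Kmap f 0 ((k : ℝ)/n)) (fun k => Kmap_ne f 0 _) m mu hzm mu_abs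
  -- conclusion
  have hS1v : (∑ k ∈ Finset.range m, a k) = 0 := by linarith [hsplit, hS0]
  rw [hS1v] at hexp
  simp at hexp
  exact mu_ne_one hexp.symm
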